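/- arXiv:1009.5518 — 2 statements merged into one kernel-verified Lean document; each statement's English description precedes it below -/
import Mathlib

section
/- Let K be a commutative ring containing Q. For f, g formal power series in zK[[z]] (zero constant term), the iteration matrix satisfies [f ∘ g] = [f] · [g], where [f] is the ℕ×ℕ matrix with entries [f]_{ij} determined by f^i/i! = ∑_j [f]_{ij} z^j/j!. -/
/-- The identity ℕ×ℕ (upper triangular) matrix. -/
def trOne {K : Type*} [CommRing K] : ℕ → ℕ → K := fun i j => if i = j then 1 else 0

/-- Product of ℕ×ℕ upper triangular matrices (entrywise a finite sum). -/
def trMul {K : Type*} [CommRing K] (M N : ℕ → ℕ → K) : ℕ → ℕ → K :=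
  fun i j => ∑ k ∈ Finset.Icc i j, M i k * N k j

/-- Powers of an ℕ×ℕ upper triangular matrix. -/
def trPow {K : Type*} [CommRing K] (M : ℕ → ℕ → K) : ℕ → (ℕ → ℕ → K)
  | 0 => trOne
  | n + 1 => trMul (trPow M n) M

/-- The `n`-diagonal matrix determined by the sequence `a`:
entry `(i, i+n)` is `a i`, all other entries vanish. -/
def diagM {K : Type*} [CommRing K] (n : ℕ) (a : ℕ → K) : ℕ → ℕ → K :=
  fun i j => if j = i + n then a i else 0

/-- A matrix is strictly upper triangular if `M i j = 0` whenever `j ≤ i`. -/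
def StrictTri {K : Type*} [CommRing K] (M : ℕ → ℕ → K) : Prop :=
  ∀ i j, j ≤ i → M i j = 0

/-- The iteration matrix of a power series `f`: `[f]_{ij}` is `j!/i!` times the
coefficient of `z^j` in `f^i`, i.e. `f^i/i! = ∑_j [f]_{ij} z^j/j!`. -/
noncomputable def itMat {K : Type*} [CommRing K] [Algebra ℚ K] (f : PowerSeries K) :
    ℕ → ℕ → K :=
  fun i j => ((j.factorial : ℚ) / (i.factorial : ℚ)) • PowerSeries.coeff j (f ^ i)

/-- Composition `f ∘ g` of formal power series, valid when `g` has zero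
constant term: the coefficient of `z^j` only depends on `∑_{i ≤ j} f_i g^i`. -/
noncomputable def compPS {K : Type*} [CommRing K] (f g : PowerSeries K) : PowerSeries K :=
  PowerSeries.mk fun j =>
    PowerSeries.coeff j (∑ i ∈ Finset.range (j + 1), PowerSeries.coeff i f • g ^ i)

section Aux

lemma aux_coeff_pow_zero {K : Type*} [CommRing K] {g : PowerSeries K}
    (hg : PowerSeries.constantCoeff g = 0)
    {j k : ℕ} (h : j < k) : PowerSeries.coeff j (g ^ k) = 0 :=
  PowerSeries.X_pow_dvd_iff.mp (pow_dvd_pow_of_dvd (PowerSeries.X_dvd_iff.mpr hg) k) j h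

lemma aux_coeff_compPS {K : Type*} [CommRing K] (f g : PowerSeries K) (j : ℕ) :
    PowerSeries.coeff j (compPS f g) =
      ∑ k ∈ Finset.range (j + 1), PowerSeries.coeff k f * PowerSeries.coeff j (g ^ k) := by
  simp [compPS, PowerSeries.coeff_mk, smul_eq_mul]

lemma aux_key {K : Type*} [CommRing K] (f g : PowerSeries K)
    (hg : PowerSeries.constantCoeff g = 0) (i : ℕ) :
    ∀ j, PowerSeries.coeff j ((compPS f g) ^ i) =
      ∑ k ∈ Finset.range (j + 1),
        PowerSeries.coeff k (f ^ i) * PowerSeries.coeff j (g ^ k) := by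
  induction i with
  | zero =>
    intro j
    rw [pow_zero, Finset.sum_eq_single 0]
    · simp
    · intro k _ hk0
      rw [pow_zero, PowerSeries.coeff_one, if_neg hk0, zero_mul]
    · intro h; exact absurd (Finset.mem_range.mpr (Nat.succ_pos j)) h
  | succ i ih =>
    intro j
    have hext : ∀ (c : ℕ → K) (a : ℕ), a ≤ j →
        ∑ k ∈ Finset.range (a + 1), c k * PowerSeries.coeff a (g ^ k)
          = ∑ k ∈ Finset.range (j + 1), c k * PowerSeries.coeff a (g ^ k) := by
      intro c a ha
      apply Finset.sum_subset
      · intro k hk; simp only [Finset.mem_range] at hk ⊢; omega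
      · intro k hk hk'
        simp only [Finset.mem_range] at hk hk'
        rw [aux_coeff_pow_zero hg (by omega), mul_zero]
    have lhs_eq : PowerSeries.coeff j ((compPS f g) ^ (i + 1)) =
        ∑ k ∈ Finset.range (j + 1), ∑ l ∈ Finset.range (j + 1),
          PowerSeries.coeff k (f ^ i) * PowerSeries.coeff l f *
            PowerSeries.coeff j (g ^ (k + l)) := by
      rw [pow_succ, PowerSeries.coeff_mul]
      have h1 : ∀ p ∈ Finset.HasAntidiagonal.antidiagonal j,
          PowerSeries.coeff p.1 ((compPS f g) ^ i) * PowerSeries.coeff p.2 (compPS f g)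
            = ∑ k ∈ Finset.range (j + 1), ∑ l ∈ Finset.range (j + 1),
              (PowerSeries.coeff k (f ^ i) * PowerSeries.coeff p.1 (g ^ k)) *
              (PowerSeries.coeff l f * PowerSeries.coeff p.2 (g ^ l)) := by
        intro p hp
        have hp' := Finset.HasAntidiagonal.mem_antidiagonal.mp hp
        rw [ih, aux_coeff_compPS, hext _ _ (by omega), hext _ _ (by omega),
          Finset.sum_mul_sum]
      rw [Finset.sum_congr rfl h1, Finset.sum_comm]
      refine Finset.sum_congr rfl fun k _ => ?_
      rw [Finset.sum_comm]
      refine Finset.sum_congr rfl fun l _ => ?_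
      have : ∀ p ∈ Finset.HasAntidiagonal.antidiagonal j,
          (PowerSeries.coeff k (f ^ i) * PowerSeries.coeff p.1 (g ^ k)) *
            (PowerSeries.coeff l f * PowerSeries.coeff p.2 (g ^ l))
          = PowerSeries.coeff k (f ^ i) * PowerSeries.coeff l f *
            (PowerSeries.coeff p.1 (g ^ k) * PowerSeries.coeff p.2 (g ^ l)) := by
        intro p _; ring
      rw [Finset.sum_congr rfl this, ← Finset.mul_sum, ← PowerSeries.coeff_mul, ← pow_add]
    rw [lhs_eq]
    -- now the right-hand side
    have h2 : ∀ m ∈ Finset.range (j + 1),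
        PowerSeries.coeff m (f ^ (i + 1)) * PowerSeries.coeff j (g ^ m)
          = ∑ q ∈ Finset.HasAntidiagonal.antidiagonal m,
              PowerSeries.coeff q.1 (f ^ i) * PowerSeries.coeff q.2 f *
                PowerSeries.coeff j (g ^ (q.1 + q.2)) := by
      intro m _
      rw [pow_succ, PowerSeries.coeff_mul, Finset.sum_mul]
      refine Finset.sum_congr rfl fun q hq => ?_
      rw [Finset.HasAntidiagonal.mem_antidiagonal.mp hq]
    rw [Finset.sum_congr rfl h2]
    set F : ℕ × ℕ → K := fun q =>
      PowerSeries.coeff q.1 (f ^ i) * PowerSeries.coeff q.2 f *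
        PowerSeries.coeff j (g ^ (q.1 + q.2)) with hF
    have hdisj : ((Finset.range (j + 1) : Finset ℕ) : Set ℕ).PairwiseDisjoint Finset.HasAntidiagonal.antidiagonal := by
      intro a _ b _ hab
      refine Finset.disjoint_left.mpr fun q hq hq' => hab ?_
      rw [← Finset.HasAntidiagonal.mem_antidiagonal.mp hq, Finset.HasAntidiagonal.mem_antidiagonal.mp hq']
    have hb : ∑ m ∈ Finset.range (j + 1), ∑ q ∈ Finset.HasAntidiagonal.antidiagonal m, F q
        = ∑ q ∈ (Finset.range (j + 1)).biUnion Finset.HasAntidiagonal.antidiagonal, F q :=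
      (Finset.sum_biUnion hdisj).symm
    have hset : (Finset.range (j + 1)).biUnion Finset.HasAntidiagonal.antidiagonal
        = (Finset.range (j + 1) ×ˢ Finset.range (j + 1)).filter (fun q => q.1 + q.2 ≤ j) := by
      ext q
      simp only [Finset.mem_biUnion, Finset.mem_range, Finset.HasAntidiagonal.mem_antidiagonal,
        Finset.mem_filter, Finset.mem_product]
      constructor
      · rintro ⟨m, hm, rfl⟩; omega
      · rintro ⟨⟨_, _⟩, h⟩; exact ⟨q.1 + q.2, by omega, rfl⟩
    have hfilt : ∑ q ∈ (Finset.range (j + 1) ×ˢ Finset.range (j + 1)).filter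
          (fun q => q.1 + q.2 ≤ j), F q
        = ∑ q ∈ Finset.range (j + 1) ×ˢ Finset.range (j + 1), F q := by
      apply Finset.sum_subset (Finset.filter_subset _ _)
      intro q hq hq'
      simp only [Finset.mem_filter, Finset.mem_product] at hq'
      have : j < q.1 + q.2 := by
        by_contra h
        exact hq' ⟨Finset.mem_product.mp hq, by omega⟩
      simp only [hF]
      rw [aux_coeff_pow_zero hg this, mul_zero]
    rw [show (∑ m ∈ Finset.range (j + 1), ∑ q ∈ Finset.HasAntidiagonal.antidiagonal m, F q)
        = ∑ q ∈ Finset.range (j + 1) ×ˢ Finset.range (j + 1), F q by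
      rw [hb, hset, hfilt]]
    rw [Finset.sum_product]

end Aux

theorem itMat_comp {K : Type*} [CommRing K] [Algebra ℚ K] (f g : PowerSeries K)
    (hf : PowerSeries.constantCoeff f = 0) (hg : PowerSeries.constantCoeff g = 0) :
    itMat (compPS f g) = trMul (itMat f) (itMat g) := by
  funext i j
  unfold itMat trMul
  rw [aux_key f g hg i j]
  have hrestrict : ∑ k ∈ Finset.range (j + 1),
      PowerSeries.coeff k (f ^ i) * PowerSeries.coeff j (g ^ k)
      = ∑ k ∈ Finset.Icc i j,
      PowerSeries.coeff k (f ^ i) * PowerSeries.coeff j (g ^ k) := by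
    refine (Finset.sum_subset ?_ ?_).symm
    · intro k hk
      simp only [Finset.mem_Icc] at hk
      simp only [Finset.mem_range]; omega
    · intro k hk hk'
      simp only [Finset.mem_range] at hk
      simp only [Finset.mem_Icc] at hk'
      rw [aux_coeff_pow_zero hf (by omega), zero_mul]
  rw [hrestrict, Finset.smul_sum]
  refine Finset.sum_congr rfl fun k hk => ?_
  rw [smul_mul_smul_comm]
  congr 1
  have hk0 : (k.factorial : ℚ) ≠ 0 := Nat.cast_ne_zero.mpr k.factorial_ne_zero
  field_simp
end

section
/- Let S be the ℕ×ℕ matrix with S_{ij} = S(j,i) the Stirling numbers of the second kind, and define Λ(S) = ∑_{n≥0} (-1)^n (S-1)^n/(n+1) and log(S) = ∑_{n≥1} (-1)^{n+1}(S-1)^n/n. Then Λ(S)_{1j} = log(S)_{1,j+1} for every j ≥ 1. -/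
/-- Stirling numbers of the second kind: `stirling2 j d` is the number of
partitions of a `j`-element set into `d` nonempty blocks. -/
def stirling2 : Nat → Nat → Nat
  | 0, 0 => 1
  | 0, _ + 1 => 0
  | _ + 1, 0 => 0
  | n + 1, k + 1 => stirling2 n k + (k + 1) * stirling2 n (k + 1)

/-- Matrix exponential `exp M = ∑ Mⁿ/n!`, entrywise a finite sum for
strictly upper triangular `M` (terms with `n > j - i` vanish). -/
noncomputable def trExp {K : Type*} [CommRing K] [Algebra ℚ K] (M : ℕ → ℕ → K) :
    ℕ → ℕ → K :=
  fun i j => ∑ n ∈ Finset.range (j - i + 1), ((n.factorial : ℚ)⁻¹) • trPow M n i j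

/-- Matrix logarithm `log M = ∑_{n≥1} (-1)^{n+1} (M-1)ⁿ/n`, entrywise a finite
sum for unitriangular `M` (terms with `n > j - i` vanish). -/
noncomputable def trLog {K : Type*} [CommRing K] [Algebra ℚ K] (M : ℕ → ℕ → K) :
    ℕ → ℕ → K :=
  fun i j => ∑ n ∈ Finset.Icc 1 (j - i),
    (((-1 : ℚ) ^ (n + 1)) / n) • trPow (fun a b => M a b - trOne a b) n i j

/-- `Λ(M) = ∑_{n≥0} (-1)ⁿ (M-1)ⁿ/(n+1)`, entrywise a finite sum for
unitriangular `M`. -/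
noncomputable def trLam {K : Type*} [CommRing K] [Algebra ℚ K] (M : ℕ → ℕ → K) :
    ℕ → ℕ → K :=
  fun i j => ∑ n ∈ Finset.range (j - i + 1),
    (((-1 : ℚ) ^ n) / (n + 1)) • trPow (fun a b => M a b - trOne a b) n i j

/-- The Stirling matrix `S` with `S_{ij} = S(j, i)`. -/
noncomputable def Smat : ℕ → ℕ → ℚ := fun i j => (stirling2 j i : ℚ)

namespace StirAux
open Finset

lemma st_succ_zero (n : ℕ) : stirling2 (n+1) 0 = 0 := rfl

lemma st_rec (n k : ℕ) : stirling2 (n+1) (k+1) = stirling2 n k + (k+1) * stirling2 n (k+1) := rfl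

lemma st_of_lt : ∀ {n k}, n < k → stirling2 n k = 0 := by
  intro n
  induction n with
  | zero => intro k hk; match k, hk with | (k+1), _ => rfl
  | succ n ih =>
    intro k hk
    match k, hk with
    | (k+1), hk =>
      rw [st_rec]
      rw [ih (by omega), ih (by omega)]
      simp

lemma st_self : ∀ n, stirling2 n n = 1 := by
  intro n
  induction n with
  | zero => rfl
  | succ n ih => rw [st_rec, ih, st_of_lt (Nat.lt_succ_self n)]; simp

lemma st_one (n : ℕ) : stirling2 (n+1) 1 = 1 := by
  induction n with
  | zero => rfl
  | succ n ih => rw [st_rec, st_succ_zero, ih]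

lemma st_sub_one_pos (n : ℕ) : 0 < stirling2 (n+2) (n+1) := by
  induction n with
  | zero => decide
  | succ n ih => rw [st_rec, st_self]; omega


/-- S(n+1, k+1) = ∑ C(n,j) S(j,k) -/
lemma st_binom : ∀ n k, stirling2 (n+1) (k+1) = ∑ j ∈ range (n+1), n.choose j * stirling2 j k := by
  intro n
  induction n with
  | zero =>
    intro k
    simp [st_rec]
    cases k <;> simp [st_self, st_of_lt]
  | succ n ih =>
    intro k
    have hsplit : ∑ j ∈ range (n+2), (n+1).choose j * stirling2 j k
        = (∑ j ∈ range (n+2), n.choose j * stirling2 j k)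
          + ∑ j ∈ range (n+2), (if j = 0 then 0 else n.choose (j-1) * stirling2 j k) := by
      rw [← sum_add_distrib]
      refine sum_congr rfl ?_
      intro j hj
      cases j with
      | zero => simp
      | succ j => simp [Nat.choose_succ_succ', Nat.add_mul]; ring
    have h1 : ∑ j ∈ range (n+2), n.choose j * stirling2 j k
        = ∑ j ∈ range (n+1), n.choose j * stirling2 j k := by
      rw [sum_range_succ, Nat.choose_succ_self]; simp
    have h2 : ∑ j ∈ range (n+2), (if j = 0 then 0 else n.choose (j-1) * stirling2 j k)
        = ∑ j ∈ range (n+1), n.choose j * stirling2 (j+1) k := by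
      rw [sum_range_succ']
      simp
    rw [hsplit, h1, h2, ← ih k]
    cases k with
    | zero =>
      have : ∑ j ∈ range (n+1), n.choose j * stirling2 (j+1) 0 = 0 := by
        apply sum_eq_zero; intro j _; simp [st_succ_zero]
      rw [this, st_rec, st_rec, st_succ_zero]
      simp [st_one]
    | succ k =>
      have : ∑ j ∈ range (n+1), n.choose j * stirling2 (j+1) (k+1)
          = (∑ j ∈ range (n+1), n.choose j * stirling2 j k)
            + (k+1) * ∑ j ∈ range (n+1), n.choose j * stirling2 j (k+1) := by
        rw [mul_sum, ← sum_add_distrib]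
        refine sum_congr rfl ?_
        intro j _
        rw [st_rec]; ring
      rw [this, ← ih k, ← ih (k+1)]
      rw [st_rec (n+1) (k+1), st_rec n (k+1)]
      ring

/-- Stirling convolution: C(j+k,j) S(n,j+k) = ∑ C(n,m) S(m,j) S(n-m,k) -/
lemma st_conv : ∀ n j k, (j+k).choose j * stirling2 n (j+k)
    = ∑ m ∈ range (n+1), n.choose m * (stirling2 m j * stirling2 (n-m) k) := by
  intro n
  induction n with
  | zero =>
    intro j k
    simp only [range_one, sum_singleton, Nat.choose_zero_right, Nat.zero_sub, one_mul]
    cases j with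
    | zero => cases k <;> simp [st_self, st_of_lt]
    | succ j => cases k <;> simp [st_of_lt, Nat.succ_add]
  | succ n ih =>
    intro j k
    match j, k with
    | 0, k =>
      rw [Nat.zero_add, Nat.choose_zero_right, one_mul]
      rw [Finset.sum_eq_single 0]
      · simp [st_self]
      · intro m _ hm
        match m, hm with
        | (m+1), _ => simp [st_succ_zero]
      · intro h; simp at h
    | (j+1), 0 =>
      rw [Nat.add_zero, Nat.choose_self, one_mul]
      rw [Finset.sum_eq_single (n+1)]
      · simp [st_self]
      · intro m hm hm'
        have : n+1-m = (n-m)+1 := by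
          simp at hm; omega
        rw [this, st_succ_zero]; ring
      · intro h; simp at h
    | (j+1), (k+1) =>
      have hsplit : ∑ m ∈ range (n+2), (n+1).choose m * (stirling2 m (j+1) * stirling2 (n+1-m) (k+1))
          = (∑ m ∈ range (n+2), n.choose m * (stirling2 m (j+1) * stirling2 (n+1-m) (k+1)))
            + ∑ m ∈ range (n+2), (if m = 0 then 0 else n.choose (m-1) * (stirling2 m (j+1) * stirling2 (n+1-m) (k+1))) := by
        rw [← sum_add_distrib]
        refine sum_congr rfl ?_
        intro m _
        cases m with
        | zero => simp
        | succ m => simp [Nat.choose_succ_succ', Nat.add_mul]; ring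
      have h1 : ∑ m ∈ range (n+2), n.choose m * (stirling2 m (j+1) * stirling2 (n+1-m) (k+1))
          = (∑ m ∈ range (n+1), n.choose m * (stirling2 m (j+1) * stirling2 (n-m) k))
            + (k+1) * ∑ m ∈ range (n+1), n.choose m * (stirling2 m (j+1) * stirling2 (n-m) (k+1)) := by
        rw [sum_range_succ, Nat.choose_succ_self, mul_sum, ← sum_add_distrib]
        simp only [zero_mul, add_zero]
        refine sum_congr rfl ?_
        intro m hm
        simp only [mem_range] at hm
        have : n+1-m = (n-m)+1 := by omega
        rw [this, st_rec]; ring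
      have h2 : ∑ m ∈ range (n+2), (if m = 0 then 0 else n.choose (m-1) * (stirling2 m (j+1) * stirling2 (n+1-m) (k+1)))
          = (∑ m ∈ range (n+1), n.choose m * (stirling2 m j * stirling2 (n-m) (k+1)))
            + (j+1) * ∑ m ∈ range (n+1), n.choose m * (stirling2 m (j+1) * stirling2 (n-m) (k+1)) := by
        rw [sum_range_succ', if_pos rfl, add_zero, mul_sum, ← sum_add_distrib]
        refine sum_congr rfl ?_
        intro m _
        rw [if_neg (Nat.succ_ne_zero m)]
        have h3 : n+1-(m+1) = n-m := by omega
        have h4 : m+1-1 = m := rfl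
        rw [h3, h4, st_rec]; ring
      rw [hsplit, h1, h2, ← ih (j+1) k, ← ih j (k+1), ← ih (j+1) (k+1)]
      have e1 : (j+1)+k = j+k+1 := by omega
      have e2 : j+(k+1) = j+k+1 := by omega
      have e3 : (j+1)+(k+1) = (j+k+1)+1 := by omega
      rw [e1, e2, e3, st_rec n (j+k+1)]
      have e4 : (j+k+1+1).choose (j+1) = (j+k+1).choose (j+1) + (j+k+1).choose j := by
        rw [Nat.choose_succ_succ']; exact Nat.add_comm _ _
      rw [e4]
      ring

end StirAux

noncomputable section

namespace SAux
open Finset Polynomial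

def Smat' : ℕ → ℕ → ℚ := fun i j => (stirling2 j i : ℚ)

def e1 : ℕ → ℚ := fun n => if n = 1 then 1 else 0

def onesRow : ℕ → ℚ := fun _ => 1

def app (a : ℕ → ℚ) (M : ℕ → ℕ → ℚ) : ℕ → ℚ := fun n => ∑ k ∈ range (n+1), a k * M k n

def Qmat : ℕ → ℕ → ℚ := fun k n => (n.choose k : ℚ)

lemma app_congr {a b : ℕ → ℚ} (M : ℕ → ℕ → ℚ) (n : ℕ) (h : ∀ k, k ≤ n → a k = b k) :
    app a M n = app b M n := by
  refine sum_congr rfl ?_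
  intro k hk
  simp only [mem_range] at hk
  rw [h k (by omega)]

lemma Smat'_of_lt {k n : ℕ} (h : n < k) : Smat' k n = 0 := by
  simp [Smat', StirAux.st_of_lt h]

lemma Smat'_self (n : ℕ) : Smat' n n = 1 := by simp [Smat', StirAux.st_self]

/-- triangular extend-and-swap helper -/
lemma tri_swap (n : ℕ) (F : ℕ → ℕ → ℚ) (hF : ∀ m k, k < m → F m k = 0) :
    ∑ k ∈ range (n+1), ∑ m ∈ range (k+1), F m k
      = ∑ m ∈ range (n+1), ∑ k ∈ range (n+1), F m k := by
  rw [← sum_comm]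
  refine sum_congr rfl ?_
  intro k hk
  simp only [mem_range] at hk
  refine sum_subset ?_ ?_
  · intro m hm; simp only [mem_range] at *; omega
  · intro m _ hm
    simp only [mem_range, not_lt] at hm
    exact hF m k (by omega)

/-- rows B with B (p+1) = app (B p) S - B p, vanishing strictly below the diagonal,
    and iterates J of `app · S` starting at B 0, expand in Mahler/binomial form. -/
lemma mahler_expand (B : ℕ → ℕ → ℚ) (J : ℕ → ℕ → ℚ)
    (hrec : ∀ p n, B (p+1) n = app (B p) Smat' n - B p n)
    (hvan : ∀ p n, n < p → B p n = 0)
    (hJ0 : J 0 = B 0) (hJ : ∀ t, J (t+1) = app (J t) Smat') :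
    ∀ t n, J t n = ∑ k ∈ range (n+1), (t.choose k : ℚ) * B k n := by
  intro t
  induction t with
  | zero =>
    intro n
    rw [hJ0, sum_eq_single 0]
    · simp
    · intro k _ hk
      match k, hk with
      | (k+1), _ => simp
    · intro h; simp at h
  | succ t ih =>
    intro n
    have expand : app (J t) Smat' n
        = ∑ k ∈ range (n+1), ∑ m ∈ range (k+1), ((t.choose m : ℚ) * B m k) * Smat' k n := by
      unfold app
      refine sum_congr rfl ?_
      intro k _
      rw [ih k, sum_mul]
    have hv : ∀ m k, k < m → ((t.choose m : ℚ) * B m k) * Smat' k n = 0 := by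
      intro m k hk; rw [hvan m k hk]; ring
    rw [hJ, expand, tri_swap n _ hv]
    have inner : ∀ m, ∑ k ∈ range (n+1), ((t.choose m : ℚ) * B m k) * Smat' k n
        = (t.choose m : ℚ) * (B m n + B (m+1) n) := by
      intro m
      have happ : app (B m) Smat' n = B m n + B (m+1) n := by rw [hrec m n]; ring
      rw [← happ]
      unfold app
      rw [mul_sum]
      exact sum_congr rfl (fun k _ => by ring)
    rw [sum_congr rfl (fun m _ => inner m)]
    have split : ∑ m ∈ range (n+1), (t.choose m : ℚ) * (B m n + B (m+1) n)
        = (∑ m ∈ range (n+1), (t.choose m : ℚ) * B m n)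
          + ∑ m ∈ range (n+1), (t.choose m : ℚ) * B (m+1) n := by
      rw [← sum_add_distrib]
      exact sum_congr rfl (fun m _ => by ring)
    have hshift : ∑ m ∈ range (n+1), (t.choose m : ℚ) * B (m+1) n
        = ∑ k ∈ range (n+1), (if k = 0 then 0 else (t.choose (k-1) : ℚ)) * B k n := by
      rw [sum_range_succ (fun m => (t.choose m : ℚ) * B (m+1) n) n,
        hvan (n+1) n (by omega), mul_zero, add_zero]
      conv_rhs => rw [sum_range_succ']
      rw [if_pos rfl, zero_mul, add_zero]
      refine sum_congr rfl ?_
      intro m _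
      rw [if_neg (Nat.succ_ne_zero m)]
      norm_num
    rw [split, hshift, ← sum_add_distrib]
    refine sum_congr rfl ?_
    intro k _
    cases k with
    | zero => simp
    | succ k =>
      rw [if_neg (Nat.succ_ne_zero k), Nat.choose_succ_succ']
      push_cast
      ring


def Arow : ℕ → ℕ → ℚ
  | 0 => e1
  | (p+1) => fun n => app (Arow p) Smat' n - Arow p n

def Orow : ℕ → ℕ → ℚ
  | 0 => onesRow
  | (p+1) => fun n => app (Orow p) Smat' n - Orow p n

def Grow : ℕ → ℕ → ℚ
  | 0 => e1
  | (t+1) => app (Grow t) Smat'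

def Hrow : ℕ → ℕ → ℚ
  | 0 => onesRow
  | (t+1) => app (Hrow t) Smat'

lemma Arow_vanish : ∀ p n, n ≤ p → Arow p n = 0 := by
  intro p
  induction p with
  | zero =>
    intro n hn
    have h0 : n = 0 := by omega
    subst h0
    simp [Arow, e1]
  | succ p ih =>
    intro n hn
    show app (Arow p) Smat' n - Arow p n = 0
    have happ : app (Arow p) Smat' n = Arow p n := by
      unfold app
      rw [sum_eq_single n]
      · rw [Smat'_self, mul_one]
      · intro k hk hkn
        simp only [mem_range] at hk
        rw [ih k (by omega), zero_mul]
      · intro h; simp at h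
    rw [happ, sub_self]

lemma e0_part : ∀ n, app (fun m => if m = 0 then (1:ℚ) else 0) Smat' n
    - (if n = 0 then (1:ℚ) else 0) = 0 := by
  intro n
  unfold app
  rw [sum_eq_single 0]
  · cases n with
    | zero => simp [Smat'_self]
    | succ n => simp [Smat', StirAux.st_succ_zero]
  · intro k _ hk; simp [hk]
  · intro h; simp at h

/-- O_k = A_k + A_{k+1} + [k=0]·e0 -/
lemma Orow_decomp : ∀ p n, Orow p n
    = (if p = 0 then (if n = 0 then (1:ℚ) else 0) else 0) + Arow p n + Arow (p+1) n := by
  intro p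
  induction p with
  | zero =>
    intro n
    show (1:ℚ) = _
    simp only [if_pos rfl]
    show (1:ℚ) = (if n = 0 then (1:ℚ) else 0) + e1 n + (app e1 Smat' n - e1 n)
    have : app e1 Smat' n = (stirling2 n 1 : ℚ) := by
      unfold app
      rw [sum_eq_single 1]
      · simp [e1, Smat']
      · intro k _ hk; simp [e1, hk]
      · intro h
        simp only [mem_range, not_lt] at h
        have h0 : n = 0 := by omega
        subst h0
        simp [Smat', StirAux.st_of_lt]
    rw [this]
    match n with
    | 0 => simp [e1, StirAux.st_of_lt]
    | 1 => simp [e1, StirAux.st_self]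
    | (n+2) => simp [e1, StirAux.st_one]
  | succ p ih =>
    intro n
    show app (Orow p) Smat' n - Orow p n = _
    have h1 : app (Orow p) Smat' n = app (fun m => (if p = 0 then (if m = 0 then (1:ℚ) else 0) else 0) + Arow p m + Arow (p+1) m) Smat' n :=
      app_congr _ _ (fun k _ => ih k)
    have h2 : ∀ (a b c : ℕ → ℚ), app (fun m => a m + b m + c m) Smat' n = app a Smat' n + app b Smat' n + app c Smat' n := by
      intro a b c
      unfold app
      rw [← sum_add_distrib, ← sum_add_distrib]
      exact sum_congr rfl (fun k _ => by ring)
    rw [h1, h2, ih n]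
    have h3 : app (fun m => if p = 0 then (if m = 0 then (1:ℚ) else 0) else 0) Smat' n
        - (if p = 0 then (if n = 0 then (1:ℚ) else 0) else 0) = 0 := by
      by_cases hp : p = 0
      · simp only [hp, if_pos rfl]; exact e0_part n
      · simp only [if_neg hp]
        unfold app
        rw [sum_eq_zero (fun k _ => by rw [zero_mul])]
        ring
    show _ = (0:ℚ) + Arow (p+1) n + Arow (p+2) n
    have hA1 : Arow (p+1) n = app (Arow p) Smat' n - Arow p n := rfl
    have hA2 : Arow (p+2) n = app (Arow (p+1)) Smat' n - Arow (p+1) n := rfl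
    have := h3
    rw [hA2, hA1]
    ring_nf
    ring_nf at this ⊢
    linarith [this]


lemma Orow_vanish : ∀ p n, n < p → Orow p n = 0 := by
  intro p n h
  rw [Orow_decomp]
  match p, h with
  | (p+1), h =>
    rw [if_neg (Nat.succ_ne_zero p), Arow_vanish (p+1) n (by omega),
      Arow_vanish (p+2) n (by omega)]
    ring

lemma F1 : ∀ t n, Grow t n = ∑ k ∈ range (n+1), (t.choose k : ℚ) * Arow k n :=
  mahler_expand Arow Grow (fun p n => rfl) (fun p n h => Arow_vanish p n (by omega)) rfl (fun t => rfl)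

lemma F2 : ∀ t n, Hrow t n = ∑ k ∈ range (n+1), (t.choose k : ℚ) * Orow k n :=
  mahler_expand Orow Hrow (fun p n => rfl) Orow_vanish rfl (fun t => rfl)

/-! ### binomial convolution of rows -/

def conv {R : Type*} [CommRing R] (a b : ℕ → R) : ℕ → R :=
  fun n => ∑ j ∈ range (n+1), (n.choose j : R) * a j * b (n-j)

def deltaRow {R : Type*} [CommRing R] : ℕ → R := fun n => if n = 0 then 1 else 0

def convPow {R : Type*} [CommRing R] (a : ℕ → R) : ℕ → ℕ → R
  | 0 => deltaRow
  | (m+1) => conv (convPow a m) a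

lemma conv_delta {R : Type*} [CommRing R] (b : ℕ → R) : conv deltaRow b = b := by
  funext n
  unfold conv
  rw [sum_eq_single 0]
  · simp [deltaRow]
  · intro j _ hj; simp [deltaRow, hj]
  · intro h; simp at h

lemma convPow_one {R : Type*} [CommRing R] (a : ℕ → R) : convPow a 1 = a := by
  show conv deltaRow a = a
  exact conv_delta a

lemma convPow_vanish {R : Type*} [CommRing R] {a : ℕ → R} (ha : a 0 = 0) :
    ∀ m n, n < m → convPow a m n = 0 := by
  intro m
  induction m with
  | zero => intro n h; omega
  | succ m ih =>
    intro n h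
    show conv (convPow a m) a n = 0
    unfold conv
    apply sum_eq_zero
    intro j hj
    simp only [mem_range] at hj
    by_cases hjm : j < m
    · rw [ih j hjm]; ring
    · have : n - j = 0 := by omega
      rw [this, ha]; ring

/-- key multiplicativity: substitution by the Stirling matrix respects products -/
lemma M1 (a b : ℕ → ℚ) (n : ℕ) :
    app (conv a b) Smat' n = conv (app a Smat') (app b Smat') n := by
  have key : ∀ i j : ℕ, ((i+j).choose i : ℚ) * (stirling2 n (i+j) : ℚ)
      = ∑ m ∈ range (n+1), (n.choose m : ℚ) * ((stirling2 m i : ℚ) * (stirling2 (n-m) j : ℚ)) := by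
    intro i j
    have := StirAux.st_conv n i j
    have hcast := congrArg (fun z : ℕ => (z : ℚ)) this
    push_cast at hcast
    exact hcast
  have lhs_eq : app (conv a b) Smat' n
      = ∑ i ∈ range (n+1), ∑ j ∈ range (n+1), a i * b j * (((i+j).choose i : ℚ) * Smat' (i+j) n) := by
    unfold app conv
    have step : ∀ k, k ∈ range (n+1) → (∑ j ∈ range (k+1), (k.choose j : ℚ) * a j * b (k-j)) * Smat' k n
        = ∑ i ∈ range (n+1), (if i ≤ k then a i * b (k-i) * (((k).choose i : ℚ) * Smat' k n) else 0) := by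
      intro k hk
      simp only [mem_range] at hk
      rw [sum_mul]
      rw [← sum_subset (show range (k+1) ⊆ range (n+1) by
            intro x hx; simp only [mem_range] at *; omega) ?van]
      · refine sum_congr rfl ?_
        intro i hi
        simp only [mem_range] at hi
        rw [if_pos (by omega)]
        ring
      case van =>
        intro i hi hni
        simp only [mem_range] at hi hni
        rw [if_neg (by omega)]
    rw [sum_congr rfl step, sum_comm]
    refine sum_congr rfl ?_
    intro i hi
    simp only [mem_range] at hi
    have e1 : ∑ k ∈ range (n+1), (if i ≤ k then a i * b (k-i) * (((k).choose i : ℚ) * Smat' k n) else 0)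
        = ∑ k ∈ Ico i (n+1), (if i ≤ k then a i * b (k-i) * (((k).choose i : ℚ) * Smat' k n) else 0) := by
      refine (sum_subset (fun x hx => by simp only [mem_Ico, mem_range] at *; omega) ?_).symm
      intro k hk hik
      simp only [mem_range] at hk
      simp only [mem_Ico, not_and, not_lt] at hik
      rw [if_neg (by omega)]
    have e2 : ∑ k ∈ Ico i (n+1), (if i ≤ k then a i * b (k-i) * (((k).choose i : ℚ) * Smat' k n) else 0)
        = ∑ j ∈ range (n+1-i), (if i ≤ i+j then a i * b (i+j-i) * (((i+j).choose i : ℚ) * Smat' (i+j) n) else 0) :=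
      sum_Ico_eq_sum_range _ _ _
    have e3 : ∑ j ∈ range (n+1-i), (if i ≤ i+j then a i * b (i+j-i) * (((i+j).choose i : ℚ) * Smat' (i+j) n) else 0)
        = ∑ j ∈ range (n+1), a i * b j * (((i+j).choose i : ℚ) * Smat' (i+j) n) := by
      rw [← sum_subset (show range (n+1-i) ⊆ range (n+1) by
            intro x hx; simp only [mem_range] at *; omega) ?van3]
      · refine sum_congr rfl ?_
        intro j hj
        rw [if_pos (by omega)]
        have h4 : i + j - i = j := by omega
        rw [h4]
      case van3 =>
        intro j hj hj2
        simp only [mem_range, not_lt] at hj hj2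
        rw [Smat'_of_lt (show n < i + j by omega)]
        ring
    rw [e1, e2, e3]
  have rhs_eq : conv (app a Smat') (app b Smat') n
      = ∑ i ∈ range (n+1), ∑ j ∈ range (n+1), a i * b j * (((i+j).choose i : ℚ) * Smat' (i+j) n) := by
    unfold conv app
    have step : ∀ m, m ∈ range (n+1) →
        (n.choose m : ℚ) * (∑ i ∈ range (m+1), a i * Smat' i m) * (∑ j ∈ range (n-m+1), b j * Smat' j (n-m))
        = ∑ i ∈ range (n+1), ∑ j ∈ range (n+1), a i * b j * ((n.choose m : ℚ) * (Smat' i m * Smat' j (n-m))) := by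
      intro m hm
      simp only [mem_range] at hm
      have exti : (∑ i ∈ range (m+1), a i * Smat' i m) = ∑ i ∈ range (n+1), a i * Smat' i m := by
        refine sum_subset (fun x hx => by simp only [mem_range] at *; omega) ?_
        intro i hi hi2
        simp only [mem_range, not_lt] at hi hi2
        rw [Smat'_of_lt (by omega)]
        ring
      have extj : (∑ j ∈ range (n-m+1), b j * Smat' j (n-m)) = ∑ j ∈ range (n+1), b j * Smat' j (n-m) := by
        refine sum_subset (fun x hx => by simp only [mem_range] at *; omega) ?_
        intro j hj hj2
        simp only [mem_range, not_lt] at hj hj2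
        rw [Smat'_of_lt (by omega)]
        ring
      rw [exti, extj, mul_assoc, sum_mul_sum, mul_sum]
      refine sum_congr rfl ?_
      intro i _
      rw [mul_sum]
      exact sum_congr rfl (fun j _ => by ring)
    rw [sum_congr rfl step, sum_comm]
    refine sum_congr rfl ?_
    intro i _
    rw [sum_comm]
    refine sum_congr rfl ?_
    intro j _
    rw [← mul_sum]
    have : ∑ m ∈ range (n+1), (n.choose m : ℚ) * (Smat' i m * Smat' j (n-m))
        = ((i+j).choose i : ℚ) * Smat' (i+j) n := (key i j).symm
    rw [this]
  rw [lhs_eq, rhs_eq]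


lemma app_deltaRow : app deltaRow Smat' = deltaRow := by
  funext n
  unfold app
  rw [sum_eq_single 0]
  · cases n with
    | zero => simp [deltaRow, Smat'_self]
    | succ n => simp [deltaRow, Smat', StirAux.st_succ_zero]
  · intro k _ hk; simp [deltaRow, hk]
  · intro h; simp at h

lemma app_convPow (a : ℕ → ℚ) : ∀ m, app (convPow a m) Smat' = convPow (app a Smat') m := by
  intro m
  induction m with
  | zero => exact app_deltaRow
  | succ m ih =>
    funext n
    show app (conv (convPow a m) a) Smat' n = conv (convPow (app a Smat') m) (app a Smat') n
    rw [M1, ih]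

def expRow (a : ℕ → ℚ) : ℕ → ℚ := fun n => ∑ m ∈ range (n+1), ((m.factorial : ℚ))⁻¹ * convPow a m n

lemma app_expRow (a : ℕ → ℚ) (ha : a 0 = 0) (n : ℕ) :
    app (expRow a) Smat' n = expRow (app a Smat') n := by
  have e0 : app (expRow a) Smat' n
      = ∑ k ∈ range (n+1), ∑ m ∈ range (k+1), ((m.factorial : ℚ))⁻¹ * convPow a m k * Smat' k n := by
    unfold app expRow
    refine sum_congr rfl ?_
    intro k _
    rw [sum_mul]
  rw [e0, tri_swap n _ (fun m k hk => by rw [convPow_vanish ha m k hk]; ring)]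
  have e2 : ∀ m, ∑ k ∈ range (n+1), ((m.factorial : ℚ))⁻¹ * convPow a m k * Smat' k n
      = ((m.factorial : ℚ))⁻¹ * convPow (app a Smat') m n := by
    intro m
    rw [← app_convPow]
    show _ = ((m.factorial : ℚ))⁻¹ * ∑ k ∈ range (n+1), convPow a m k * Smat' k n
    rw [mul_sum]
    exact sum_congr rfl (fun k _ => by ring)
  rw [sum_congr rfl (fun m _ => e2 m)]
  rfl

lemma convPow_e1 : ∀ m, convPow e1 m = fun n => if n = m then (m.factorial : ℚ) else 0 := by
  intro m
  induction m with
  | zero =>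
    funext n
    show deltaRow n = _
    simp [deltaRow]
  | succ m ih =>
    funext n
    show conv (convPow e1 m) e1 n = _
    unfold conv
    simp only [ih]
    rw [sum_eq_single m]
    · by_cases hn : n = m + 1
      · subst hn
        rw [if_pos rfl, if_pos rfl]
        have h1 : m + 1 - m = 1 := by omega
        rw [h1]
        simp only [e1, if_pos rfl]
        rw [Nat.choose_succ_self_right, Nat.factorial_succ]
        push_cast
        ring
      · rw [if_pos rfl, if_neg hn]
        have he : e1 (n - m) = 0 := by
          simp only [e1]
          rw [if_neg (show ¬ n - m = 1 by omega)]
        rw [he, mul_zero]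
    · intro j _ hj
      rw [if_neg hj]
      ring
    · intro h
      simp only [mem_range, not_lt] at h
      rw [Nat.choose_eq_zero_of_lt (by omega)]
      push_cast
      ring

lemma Grow_zero : ∀ t, Grow t 0 = 0 := by
  intro t
  induction t with
  | zero => simp [Grow, e1]
  | succ t ih =>
    show app (Grow t) Smat' 0 = 0
    unfold app
    rw [range_one, sum_singleton, ih, zero_mul]

lemma F3 : ∀ t, Hrow t = expRow (Grow t) := by
  intro t
  induction t with
  | zero =>
    funext n
    show (1:ℚ) = _
    unfold expRow
    rw [show Grow 0 = e1 from rfl]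
    have : ∀ m, ((m.factorial : ℚ))⁻¹ * convPow e1 m n = if n = m then 1 else 0 := by
      intro m
      simp only [convPow_e1 m]
      by_cases hm : n = m
      · rw [if_pos hm, if_pos hm]
        rw [inv_mul_cancel₀ (by exact_mod_cast Nat.factorial_ne_zero m)]
      · rw [if_neg hm, if_neg hm, mul_zero]
    rw [sum_congr rfl (fun m _ => this m)]
    rw [sum_eq_single n]
    · simp
    · intro j _ hj; simp [Ne.symm hj]
    · intro h; simp at h
  | succ t ih =>
    funext n
    show app (Hrow t) Smat' n = expRow (Grow (t+1)) n
    rw [ih]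
    rw [app_expRow (Grow t) (Grow_zero t) n]
    rfl


/-! ### polynomial lift and derivative extraction -/

def chPoly : ℕ → Polynomial ℚ
  | 0 => 1
  | (k+1) => Polynomial.C (((k : ℚ)+1)⁻¹) * (chPoly k * (Polynomial.X - Polynomial.C (k : ℚ)))

lemma chPoly_eval (t : ℕ) : ∀ k, (chPoly k).eval (t : ℚ) = (t.choose k : ℚ) := by
  intro k
  induction k with
  | zero => simp [chPoly]
  | succ k ih =>
    show ((Polynomial.C (((k : ℚ)+1)⁻¹) * (chPoly k * (Polynomial.X - Polynomial.C (k : ℚ))))).eval _ = _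
    rw [Polynomial.eval_mul, Polynomial.eval_mul, Polynomial.eval_C, Polynomial.eval_sub,
      Polynomial.eval_X, Polynomial.eval_C, ih]
    by_cases h : k ≤ t
    · have hnat : t.choose (k+1) * (k+1) = t.choose k * (t - k) := Nat.choose_succ_right_eq t k
      have hcast : ((t.choose (k+1) : ℚ)) * ((k : ℚ)+1) = (t.choose k : ℚ) * ((t : ℚ) - (k : ℚ)) := by
        have := congrArg (fun z : ℕ => (z : ℚ)) hnat
        push_cast at this
        rw [Nat.cast_sub h] at this
        push_cast at this
        linarith [this]
      have hk1 : ((k : ℚ)+1) ≠ 0 := by positivity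
      field_simp at hcast ⊢
      linarith [hcast]
    · rw [Nat.choose_eq_zero_of_lt (by omega), Nat.choose_eq_zero_of_lt (by omega)]
      push_cast
      ring

def der0 (p : Polynomial ℚ) : ℚ := (Polynomial.derivative p).eval 0

lemma der0_add (p q : Polynomial ℚ) : der0 (p + q) = der0 p + der0 q := by
  simp [der0]

lemma der0_sum {α : Type*} (s : Finset α) (f : α → Polynomial ℚ) :
    der0 (∑ x ∈ s, f x) = ∑ x ∈ s, der0 (f x) := by
  simp [der0, Polynomial.derivative_sum, Polynomial.eval_finset_sum]

lemma der0_mul (p q : Polynomial ℚ) :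
    der0 (p * q) = der0 p * q.eval 0 + p.eval 0 * der0 q := by
  simp [der0, Polynomial.derivative_mul]

lemma der0_C (c : ℚ) : der0 (Polynomial.C c) = 0 := by simp [der0]

lemma der0_C_mul (c : ℚ) (p : Polynomial ℚ) : der0 (Polynomial.C c * p) = c * der0 p := by
  rw [der0_mul, der0_C]
  simp

lemma chPoly_eval0 : ∀ k, (chPoly k).eval 0 = if k = 0 then 1 else 0 := by
  intro k
  induction k with
  | zero => simp [chPoly]
  | succ k ih =>
    show ((Polynomial.C (((k : ℚ)+1)⁻¹) * (chPoly k * (Polynomial.X - Polynomial.C (k : ℚ))))).eval _ = _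
    rw [Polynomial.eval_mul, Polynomial.eval_mul, Polynomial.eval_C, Polynomial.eval_sub,
      Polynomial.eval_X, Polynomial.eval_C, ih]
    rw [if_neg (Nat.succ_ne_zero k)]
    cases k with
    | zero => simp
    | succ k => simp

lemma chPoly_der0 : ∀ k, der0 (chPoly k) = if k = 0 then 0 else ((-1:ℚ))^(k+1)/(k:ℚ) := by
  intro k
  induction k with
  | zero => simp [chPoly, der0]
  | succ k ih =>
    show der0 ((Polynomial.C (((k : ℚ)+1)⁻¹) * (chPoly k * (Polynomial.X - Polynomial.C (k : ℚ))))) = _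
    rw [der0_C_mul, der0_mul, chPoly_eval0]
    have hd : der0 (Polynomial.X - Polynomial.C (k : ℚ)) = 1 := by simp [der0]
    have he : (Polynomial.X - Polynomial.C (k : ℚ)).eval 0 = -(k:ℚ) := by simp
    rw [hd, he, ih, if_neg (Nat.succ_ne_zero k)]
    cases k with
    | zero => norm_num
    | succ k =>
      rw [if_neg (Nat.succ_ne_zero k)]
      have hk : ((k:ℚ)+1) ≠ 0 := by positivity
      have hk2 : ((k:ℚ)+1+1) ≠ 0 := by positivity
      push_cast
      field_simp
      ring

def Gpoly : ℕ → Polynomial ℚ := fun m => ∑ k ∈ range (m+1), Polynomial.C (Arow k m) * chPoly k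

def Hpoly : ℕ → Polynomial ℚ := fun m => ∑ k ∈ range (m+1), Polynomial.C (Orow k m) * chPoly k

def expRowP (a : ℕ → Polynomial ℚ) : ℕ → Polynomial ℚ :=
  fun n => ∑ m ∈ range (n+1), Polynomial.C (((m.factorial : ℚ))⁻¹) * convPow a m n

lemma eval_conv (x : ℚ) (a b : ℕ → Polynomial ℚ) (n : ℕ) :
    (conv a b n).eval x = conv (fun i => (a i).eval x) (fun i => (b i).eval x) n := by
  unfold conv
  rw [Polynomial.eval_finset_sum]
  refine sum_congr rfl ?_
  intro j _
  rw [Polynomial.eval_mul, Polynomial.eval_mul, Polynomial.eval_natCast]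

lemma eval_convPow (x : ℚ) (a : ℕ → Polynomial ℚ) :
    ∀ m n, (convPow a m n).eval x = convPow (fun i => (a i).eval x) m n := by
  intro m
  induction m with
  | zero =>
    intro n
    show (deltaRow n : Polynomial ℚ).eval x = (deltaRow n : ℚ)
    unfold deltaRow
    by_cases h : n = 0 <;> simp [h]
  | succ m ih =>
    intro n
    show (conv (convPow a m) a n).eval x = conv (convPow (fun i => (a i).eval x) m) (fun i => (a i).eval x) n
    rw [eval_conv]
    unfold conv
    refine sum_congr rfl ?_
    intro j _
    simp only []
    rw [ih j]

lemma eval_Gpoly (t m : ℕ) : (Gpoly m).eval (t : ℚ) = Grow t m := by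
  unfold Gpoly
  rw [Polynomial.eval_finset_sum, F1 t m]
  refine sum_congr rfl ?_
  intro k _
  rw [Polynomial.eval_mul, Polynomial.eval_C, chPoly_eval]
  ring

lemma eval_Hpoly (t m : ℕ) : (Hpoly m).eval (t : ℚ) = Hrow t m := by
  unfold Hpoly
  rw [Polynomial.eval_finset_sum, F2 t m]
  refine sum_congr rfl ?_
  intro k _
  rw [Polynomial.eval_mul, Polynomial.eval_C, chPoly_eval]
  ring

/-- main lifted identity -/
lemma HG : ∀ m, Hpoly m = expRowP Gpoly m := by
  intro m
  apply Polynomial.eq_of_infinite_eval_eq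
  apply Set.Infinite.mono (show Set.range ((↑) : ℕ → ℚ) ⊆ _ from ?_)
  · exact Set.infinite_range_of_injective Nat.cast_injective
  intro x hx
  obtain ⟨t, rfl⟩ := hx
  show (Hpoly m).eval _ = (expRowP Gpoly m).eval _
  rw [eval_Hpoly]
  unfold expRowP
  rw [Polynomial.eval_finset_sum]
  have : ∀ μ, (Polynomial.C (((μ.factorial : ℚ))⁻¹) * convPow Gpoly μ m).eval (t:ℚ)
      = ((μ.factorial : ℚ))⁻¹ * convPow (Grow t) μ m := by
    intro μ
    rw [Polynomial.eval_mul, Polynomial.eval_C, eval_convPow]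
    congr 1
    refine congrFun (congrFun (congrArg _ ?_) μ) m
    funext i
    exact eval_Gpoly t i
  rw [sum_congr rfl (fun μ _ => this μ)]
  have := congrFun (F3 t) m
  rw [this]
  rfl


def Lrow : ℕ → ℚ := fun m => der0 (Gpoly m)

lemma ev0_Gpoly (m : ℕ) : (Gpoly m).eval 0 = e1 m := by
  unfold Gpoly
  rw [Polynomial.eval_finset_sum]
  rw [sum_eq_single 0]
  · rw [Polynomial.eval_mul, Polynomial.eval_C, chPoly_eval0, if_pos rfl, mul_one]
    rfl
  · intro k _ hk
    rw [Polynomial.eval_mul, Polynomial.eval_C, chPoly_eval0, if_neg hk, mul_zero]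
  · intro h; simp at h

lemma Lrow_eq (m : ℕ) : Lrow m = ∑ k ∈ range (m+1), (if k = 0 then 0 else ((-1:ℚ))^(k+1)/(k:ℚ)) * Arow k m := by
  unfold Lrow Gpoly
  rw [der0_sum]
  refine sum_congr rfl ?_
  intro k _
  rw [der0_C_mul, chPoly_der0]
  ring

lemma Lrow_zero : Lrow 0 = 0 := by
  rw [Lrow_eq]
  simp

lemma der0_Hpoly (m : ℕ) : der0 (Hpoly m)
    = ∑ k ∈ range (m+1), (if k = 0 then 0 else ((-1:ℚ))^(k+1)/(k:ℚ)) * Orow k m := by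
  unfold Hpoly
  rw [der0_sum]
  refine sum_congr rfl ?_
  intro k _
  rw [der0_C_mul, chPoly_der0]
  ring

lemma der0_natCast (n : ℕ) : der0 ((n : Polynomial ℚ)) = 0 := by
  simp [der0]

lemma ev0_natCast (n : ℕ) : ((n : Polynomial ℚ)).eval 0 = (n : ℚ) := by
  simp

lemma der0_conv (a b : ℕ → Polynomial ℚ) (n : ℕ) :
    der0 (conv a b n)
      = conv (fun i => der0 (a i)) (fun i => (b i).eval 0) n
        + conv (fun i => (a i).eval 0) (fun i => der0 (b i)) n := by
  unfold conv
  rw [der0_sum, ← sum_add_distrib]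
  refine sum_congr rfl ?_
  intro j _
  rw [der0_mul, der0_mul, der0_natCast, ev0_natCast, Polynomial.eval_mul, ev0_natCast]
  simp only []
  ring

lemma ev0_convPow_G : ∀ μ m, (convPow Gpoly μ m).eval 0 = convPow e1 μ m := by
  intro μ m
  rw [eval_convPow]
  have : (fun i => (Gpoly i).eval 0) = e1 := funext ev0_Gpoly
  rw [this]

lemma conv_delta' {R : Type*} [CommRing R] (b : ℕ → R) (n : ℕ) : conv deltaRow b n = b n := by
  rw [conv_delta]

lemma der0_deltaRowP (m : ℕ) : der0 ((deltaRow m : Polynomial ℚ)) = 0 := by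
  unfold deltaRow
  by_cases h : m = 0 <;> simp [h, der0]

lemma der0_convPow_G : ∀ μ m, der0 (convPow Gpoly (μ+1) m)
    = (((μ:ℚ))+1) * ((m.choose μ : ℚ) * (μ.factorial : ℚ) * Lrow (m - μ)) := by
  intro μ
  induction μ with
  | zero =>
    intro m
    have h1 : convPow Gpoly 1 = Gpoly := convPow_one Gpoly
    rw [h1]
    simp [Lrow]
  | succ μ ih =>
    intro m
    show der0 (conv (convPow Gpoly (μ+1)) Gpoly m) = _
    rw [der0_conv]
    have hfirst : conv (fun i => der0 (convPow Gpoly (μ+1) i)) (fun i => (Gpoly i).eval 0) m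
        = (if 1 ≤ m then ((m:ℚ)) * ((((μ:ℚ))+1) * ((m-1).choose μ : ℚ) * (μ.factorial : ℚ) * Lrow (m - 1 - μ)) else 0) := by
      unfold conv
      simp only [ev0_Gpoly]
      by_cases hm : 1 ≤ m
      · rw [if_pos hm]
        rw [sum_eq_single (m-1)]
        · rw [ih (m-1)]
          have he : e1 (m - (m-1)) = 1 := by
            have : m - (m-1) = 1 := by omega
            rw [this]; simp [e1]
          rw [he]
          have hch : (m.choose (m-1) : ℚ) = (m : ℚ) := by
            match m, hm with
            | (m+1), _ =>
              simp only [Nat.add_sub_cancel]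
              rw [Nat.choose_succ_self_right]
          rw [hch]
          ring
        · intro j hj hjm
          simp only [mem_range] at hj
          have : e1 (m - j) = 0 := by
            simp only [e1]
            rw [if_neg (by omega)]
          rw [this]
          ring
        · intro h
          simp only [mem_range, not_lt] at h
          omega
      · rw [if_neg hm]
        have hm0 : m = 0 := by omega
        subst hm0
        rw [range_one, sum_singleton]
        have : e1 0 = 0 := by simp [e1]
        simp only [Nat.sub_zero, this]
        ring
    have hsecond : conv (fun i => (convPow Gpoly (μ+1) i).eval 0) (fun i => der0 (Gpoly i)) m
        = ((m.choose (μ+1) : ℚ)) * ((μ+1).factorial : ℚ) * Lrow (m - (μ+1)) := by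
      unfold conv
      simp only [ev0_convPow_G, convPow_e1]
      rw [sum_eq_single (μ+1)]
      · rw [if_pos rfl]
        show ((m.choose (μ+1) : ℚ)) * (((μ+1).factorial : ℚ)) * Lrow (m - (μ+1)) = _
        rfl
      · intro j _ hj
        rw [if_neg hj]
        ring
      · intro h
        simp only [mem_range, not_lt] at h
        rw [Nat.choose_eq_zero_of_lt (by omega)]
        push_cast
        ring
    rw [hfirst, hsecond]
    by_cases hm : 1 ≤ m
    · rw [if_pos hm]
      -- m * ((μ+1) * C(m-1,μ) * μ! * L) + C(m,μ+1)*(μ+1)! * L = (μ+2) * (C(m,μ+1) * (μ+1)! * L)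
      have hnat : m * ((m-1).choose μ) = m.choose (μ+1) * (μ+1) := by
        match m, hm with
        | (m+1), _ =>
          simp only [Nat.add_sub_cancel]
          exact Nat.add_one_mul_choose_eq m μ
      have hcast : ((m:ℚ)) * (((m-1).choose μ : ℚ)) = (m.choose (μ+1) : ℚ) * (((μ:ℚ))+1) := by
        have := congrArg (fun z : ℕ => (z : ℚ)) hnat
        push_cast at this
        convert this using 2 <;> push_cast <;> ring
      have hfac : (((μ+1).factorial : ℚ)) = (((μ:ℚ))+1) * (μ.factorial : ℚ) := by
        rw [Nat.factorial_succ]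
        push_cast
        ring
      have hsub : m - 1 - μ = m - (μ+1) := by omega
      rw [hsub, hfac]
      push_cast
      linear_combination (((μ:ℚ))+1) * ((μ.factorial : ℚ)) * Lrow (m - (μ+1)) * hcast
    · have hm0 : m = 0 := by omega
      subst hm0
      rw [if_neg hm]
      rw [Nat.choose_eq_zero_of_lt (by omega)]
      push_cast
      ring


lemma der0_expRowP (m : ℕ) : der0 (expRowP Gpoly m)
    = ∑ j ∈ range (m+1), (m.choose j : ℚ) * Lrow (m - j) := by
  unfold expRowP
  rw [der0_sum]
  have hterm : ∀ μ, der0 (Polynomial.C (((μ.factorial : ℚ))⁻¹) * convPow Gpoly μ m)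
      = ((μ.factorial : ℚ))⁻¹ * der0 (convPow Gpoly μ m) := fun μ => der0_C_mul _ _
  rw [sum_congr rfl (fun μ _ => hterm μ)]
  rw [sum_range_succ']
  have h0 : ((Nat.factorial 0 : ℚ))⁻¹ * der0 (convPow Gpoly 0 m) = 0 := by
    show _ * der0 ((deltaRow m : Polynomial ℚ)) = 0
    rw [der0_deltaRowP, mul_zero]
  rw [h0, add_zero]
  have hterm2 : ∀ μ, (((μ+1).factorial : ℚ))⁻¹ * der0 (convPow Gpoly (μ+1) m)
      = (m.choose μ : ℚ) * Lrow (m - μ) := by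
    intro μ
    rw [der0_convPow_G]
    have hfac : (((μ+1).factorial : ℚ)) = (((μ:ℚ))+1) * (μ.factorial : ℚ) := by
      rw [Nat.factorial_succ]; push_cast; ring
    rw [hfac]
    have h1 : (((μ:ℚ))+1) ≠ 0 := by positivity
    have h2 : ((μ.factorial : ℚ)) ≠ 0 := by exact_mod_cast Nat.factorial_ne_zero μ
    field_simp
  rw [sum_congr rfl (fun μ _ => hterm2 μ)]
  rw [sum_range_succ]
  have : Lrow (m - m) = 0 := by
    have h : m - m = 0 := by omega
    rw [h, Lrow_zero]
  rw [this, mul_zero, add_zero]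

lemma julia_row (m : ℕ) :
    ∑ k ∈ range (m+1), (if k = 0 then 0 else ((-1:ℚ))^(k+1)/(k:ℚ)) * (Arow k m + Arow (k+1) m)
      = ∑ j ∈ range (m+1), (m.choose j : ℚ) * Lrow j := by
  have hH : der0 (Hpoly m) = der0 (expRowP Gpoly m) := by rw [HG]
  rw [der0_Hpoly, der0_expRowP] at hH
  have lhs_eq : ∑ k ∈ range (m+1), (if k = 0 then 0 else ((-1:ℚ))^(k+1)/(k:ℚ)) * (Arow k m + Arow (k+1) m)
      = ∑ k ∈ range (m+1), (if k = 0 then 0 else ((-1:ℚ))^(k+1)/(k:ℚ)) * Orow k m := by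
    refine sum_congr rfl ?_
    intro k _
    cases k with
    | zero => simp
    | succ k =>
      rw [Orow_decomp (k+1) m]
      rw [if_neg (Nat.succ_ne_zero k), if_neg (Nat.succ_ne_zero k)]
      ring
  have rhs_eq : ∑ j ∈ range (m+1), (m.choose j : ℚ) * Lrow (m - j)
      = ∑ j ∈ range (m+1), (m.choose j : ℚ) * Lrow j := by
    conv_rhs => rw [← Finset.sum_range_reflect]
    refine sum_congr rfl ?_
    intro j hj
    simp only [mem_range] at hj
    have h1 : m + 1 - 1 - j = m - j := by omega
    rw [h1, Nat.choose_symm (show j ≤ m by omega)]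
  rw [lhs_eq, hH, rhs_eq]

lemma julia_app (m : ℕ) : app Lrow Smat' m = app Lrow Qmat m := by
  have lhs1 : app Lrow Smat' m
      = ∑ j ∈ range (m+1), ∑ k ∈ range (j+1),
          ((if k = 0 then 0 else ((-1:ℚ))^(k+1)/(k:ℚ)) * Arow k j) * Smat' j m := by
    unfold app
    refine sum_congr rfl ?_
    intro j _
    rw [Lrow_eq j, sum_mul]
  rw [lhs1, tri_swap m _ (fun k j hjk => by rw [Arow_vanish k j (by omega)]; ring)]
  have inner : ∀ k : ℕ, ∑ j ∈ range (m+1), ((if k = 0 then 0 else ((-1:ℚ))^(k+1)/(k:ℚ)) * Arow k j) * Smat' j m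
      = (if k = 0 then 0 else ((-1:ℚ))^(k+1)/(k:ℚ)) * (Arow k m + Arow (k+1) m) := by
    intro k
    have happ : app (Arow k) Smat' m = Arow k m + Arow (k+1) m := by
      have : Arow (k+1) m = app (Arow k) Smat' m - Arow k m := rfl
      rw [this]; ring
    rw [← happ]
    unfold app
    rw [mul_sum]
    exact sum_congr rfl (fun j _ => by ring)
  rw [sum_congr rfl (fun k _ => inner k), julia_row m]
  unfold app Qmat
  exact sum_congr rfl (fun j _ => by ring)

/-- shift-intertwining from the Stirling binomial recurrence -/
lemma shift_app (v : ℕ → ℚ) (n : ℕ) :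
    app v Smat' (n+1) = app (fun j => app (fun k => v (k+1)) Smat' j) Qmat n := by
  unfold app
  rw [sum_range_succ']
  have h0 : v 0 * Smat' 0 (n+1) = 0 := by
    show v 0 * ((stirling2 (n+1) 0 : ℕ) : ℚ) = 0
    rw [StirAux.st_succ_zero]
    push_cast
    ring
  rw [h0, add_zero]
  have step : ∀ k, v (k+1) * Smat' (k+1) (n+1)
      = ∑ j ∈ range (n+1), (n.choose j : ℚ) * (v (k+1) * Smat' k j) := by
    intro k
    show v (k+1) * ((stirling2 (n+1) (k+1) : ℕ) : ℚ) = _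
    rw [StirAux.st_binom n k]
    push_cast
    rw [mul_sum]
    refine sum_congr rfl ?_
    intro j _
    unfold Smat'
    ring
  rw [sum_congr rfl (fun k _ => step k), sum_comm]
  refine sum_congr rfl ?_
  intro j hj
  simp only [mem_range] at hj
  have ext : ∑ k ∈ range (j+1), v (k+1) * Smat' k j = ∑ k ∈ range (n+1), v (k+1) * Smat' k j := by
    refine sum_subset (fun x hx => by simp only [mem_range] at *; omega) ?_
    intro k hk hk2
    simp only [mem_range, not_lt] at hk hk2
    rw [Smat'_of_lt (by omega)]
    ring
  show ∑ x ∈ range (n+1), (n.choose j : ℚ) * (v (x+1) * Smat' x j)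
      = (∑ k ∈ range (j+1), v (k+1) * Smat' k j) * Qmat j n
  rw [ext]
  show _ = (∑ k ∈ range (n+1), v (k+1) * Smat' k j) * ((n.choose j : ℕ) : ℚ)
  rw [sum_mul]
  exact sum_congr rfl (fun k _ => by ring)

lemma pascal_app (v : ℕ → ℚ) (n : ℕ) :
    app v Qmat (n+1) = app v Qmat n + app (fun k => v (k+1)) Qmat n := by
  unfold app Qmat
  have split : ∀ k, k ∈ range (n+2) → v k * (((n+1).choose k : ℕ) : ℚ)
      = v k * ((n.choose k : ℕ) : ℚ) + (if k = 0 then 0 else v k * ((n.choose (k-1) : ℕ) : ℚ)) := by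
    intro k _
    cases k with
    | zero => simp
    | succ k =>
      rw [if_neg (Nat.succ_ne_zero k), Nat.choose_succ_succ']
      push_cast
      try simp only [Nat.add_sub_cancel]
      ring
  rw [sum_congr rfl split, sum_add_distrib]
  congr 1
  · rw [sum_range_succ, Nat.choose_succ_self]
    push_cast
    rw [mul_zero, add_zero]
  · rw [sum_range_succ', if_pos rfl, add_zero]
    refine sum_congr rfl ?_
    intro k _
    rw [if_neg (Nat.succ_ne_zero k)]
    simp only [Nat.add_sub_cancel]

lemma Qinj (w : ℕ → ℚ) (h : ∀ n, app w Qmat n = 0) : ∀ n, w n = 0 := by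
  intro n
  induction n using Nat.strong_induction_on with
  | _ n ih =>
    have := h n
    unfold app Qmat at this
    rw [sum_range_succ, Nat.choose_self] at this
    have hz : ∑ k ∈ range n, w k * ((n.choose k : ℕ) : ℚ) = 0 := by
      apply sum_eq_zero
      intro k hk
      simp only [mem_range] at hk
      rw [ih k hk]
      ring
    rw [hz] at this
    push_cast at this
    linarith [this]

lemma heart (m : ℕ) : app (fun k => Lrow (k+1)) Smat' m = Lrow m + Lrow (m+1) := by
  have key : ∀ n, app (fun k => (app (fun j => Lrow (j+1)) Smat' k) - Lrow k - Lrow (k+1)) Qmat n = 0 := by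
    intro n
    have lin : app (fun k => (app (fun j => Lrow (j+1)) Smat' k) - Lrow k - Lrow (k+1)) Qmat n
        = app (fun j => app (fun k => Lrow (k+1)) Smat' j) Qmat n
          - app Lrow Qmat n - app (fun k => Lrow (k+1)) Qmat n := by
      unfold app
      rw [← sum_sub_distrib, ← sum_sub_distrib]
      exact sum_congr rfl (fun k _ => by ring)
    rw [lin, ← shift_app Lrow n, julia_app (n+1), pascal_app Lrow n]
    ring
  have := Qinj _ key m
  have h2 : app (fun j => Lrow (j+1)) Smat' m - Lrow m - Lrow (m+1) = 0 := this
  linarith [h2]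


/-! ### bridges to trLog/trLam and the final induction -/

lemma range_ite_to_Icc (f : ℕ → ℚ) (n : ℕ) :
    ∑ k ∈ range (n+1), (if k = 0 then 0 else f k) = ∑ k ∈ Icc 1 n, f k := by
  rw [range_eq_Ico, sum_eq_sum_Ico_succ_bot (by omega), if_pos rfl, zero_add,
    ← Finset.Ico_add_one_right_eq_Icc]
  refine sum_congr rfl ?_
  intro k hk
  simp only [mem_Ico] at hk
  rw [if_neg (by omega)]

end SAux
end

namespace SAux
open Finset
noncomputable section

def NS : ℕ → ℕ → ℚ := fun a b => Smat a b - trOne a b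

lemma Smat_eq_Smat' : Smat = Smat' := rfl

lemma Arow_eq_trPow : ∀ p n, Arow p n = trPow NS p 1 n := by
  intro p
  induction p with
  | zero =>
    intro n
    show e1 n = trOne 1 n
    unfold e1 trOne
    by_cases h : n = 1
    · rw [if_pos h, if_pos h.symm]
    · rw [if_neg h, if_neg (fun hh => h hh.symm)]
  | succ p ih =>
    intro n
    show app (Arow p) Smat' n - Arow p n = trMul (trPow NS p) NS 1 n
    unfold trMul
    cases n with
    | zero =>
      show app (Arow p) Smat' 0 - Arow p 0 = ∑ k ∈ Icc 1 0, _
      rw [show Icc 1 0 = (∅ : Finset ℕ) by rfl, sum_empty]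
      unfold app
      rw [range_one, sum_singleton, Smat'_self, mul_one, sub_self]
    | succ n =>
      have hsplit : app (Arow p) Smat' (n+1) = ∑ k ∈ Icc 1 (n+1), Arow p k * Smat' k (n+1) := by
        unfold app
        rw [range_eq_Ico, sum_eq_sum_Ico_succ_bot (by omega),
          Arow_vanish p 0 (by omega), zero_mul, zero_add, ← Finset.Ico_add_one_right_eq_Icc]
      rw [hsplit]
      have hone : ∑ k ∈ Icc 1 (n+1), Arow p k * trOne k (n+1) = Arow p (n+1) := by
        rw [sum_eq_single (n+1)]
        · unfold trOne
          rw [if_pos rfl, mul_one]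
        · intro k _ hk
          unfold trOne
          rw [if_neg hk, mul_zero]
        · intro h
          simp only [mem_Icc] at h
          omega
      have : ∑ k ∈ Icc 1 (n+1), trPow NS p 1 k * NS k (n+1)
          = ∑ k ∈ Icc 1 (n+1), (Arow p k * Smat' k (n+1) - Arow p k * trOne k (n+1)) := by
        refine sum_congr rfl ?_
        intro k _
        rw [← ih k]
        unfold NS
        rw [Smat_eq_Smat']
        ring
      rw [this, sum_sub_distrib, hone]

lemma Lrow_eq_trLog : ∀ n, Lrow n = trLog Smat 1 n := by
  intro n
  rw [Lrow_eq]
  have h1 : ∑ k ∈ range (n+1), (if k = 0 then 0 else ((-1:ℚ))^(k+1)/(k:ℚ)) * Arow k n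
      = ∑ k ∈ range (n+1), (if k = 0 then 0 else ((-1:ℚ))^(k+1)/(k:ℚ) * Arow k n) := by
    refine sum_congr rfl ?_
    intro k _
    by_cases h : k = 0 <;> simp [h]
  rw [h1, range_ite_to_Icc]
  unfold trLog
  have h2 : (n : ℕ) - 1 ≤ n := by omega
  rw [show (∑ p ∈ Icc 1 (n - 1),
      (((-1 : ℚ) ^ (p + 1)) / p) • trPow (fun a b => Smat a b - trOne a b) p 1 n)
    = ∑ p ∈ Icc 1 (n - 1), ((-1:ℚ))^(p+1)/(p:ℚ) * Arow p n from ?_]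
  · refine (sum_subset ?_ ?_).symm
    · intro x hx
      simp only [mem_Icc] at *
      omega
    · intro k hk hk2
      simp only [mem_Icc] at hk hk2
      rw [Arow_vanish k n (by omega), mul_zero]
  · refine sum_congr rfl ?_
    intro p _
    rw [smul_eq_mul, Arow_eq_trPow]
    rfl

lemma lamF_eq (j P : ℕ) (h : j ≤ P + 1) :
    trLam Smat 1 j = ∑ p ∈ range (P+1), ((-1:ℚ))^p/((p:ℚ)+1) * Arow p j := by
  unfold trLam
  have hterm : ∀ p : ℕ, (((-1 : ℚ) ^ p) / ((p:ℚ) + 1)) • trPow (fun a b => Smat a b - trOne a b) p 1 j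
      = ((-1:ℚ))^p/((p:ℚ)+1) * Arow p j := by
    intro p
    rw [smul_eq_mul, Arow_eq_trPow]
    rfl
  rw [sum_congr rfl (fun p _ => by
    rw [show (((-1 : ℚ) ^ p) / (↑p + 1)) • trPow (fun a b => Smat a b - trOne a b) p 1 j
      = ((-1:ℚ))^p/((p:ℚ)+1) * Arow p j from hterm p])]
  refine sum_subset ?_ ?_
  · intro x hx
    simp only [mem_range] at *
    omega
  · intro p hp hp2
    simp only [mem_range, not_lt] at hp hp2
    rw [Arow_vanish p j (by omega), mul_zero]

def lamF : ℕ → ℚ := fun j => trLam Smat 1 j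

lemma lamF_zero : lamF 0 = 0 := by
  rw [lamF, lamF_eq 0 0 (by omega)]
  rw [range_one, sum_singleton, Arow_vanish 0 0 (by omega), mul_zero]

lemma Lrow_one : Lrow 1 = 0 := by
  rw [Lrow_eq]
  apply sum_eq_zero
  intro k hk
  simp only [mem_range] at hk
  interval_cases k
  · simp
  · rw [Arow_vanish 1 1 (by omega), mul_zero]

lemma ell_rec : ∀ n, Lrow n = app lamF Smat' n - lamF n := by
  intro n
  cases n with
  | zero =>
    rw [Lrow_eq]
    have h1 : app lamF Smat' 0 = lamF 0 := by
      unfold app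
      rw [range_one, sum_singleton, Smat'_self, mul_one]
    rw [h1]
    simp [Arow_vanish 0 0 (le_refl 0)]
  | succ n' =>
    set n := n' + 1 with hn
    have step1 : Lrow n = ∑ q ∈ range n, ((-1:ℚ))^q/((q:ℚ)+1) * (app (Arow q) Smat' n - Arow q n) := by
      rw [Lrow_eq]
      have h1 : ∑ k ∈ range (n+1), (if k = 0 then 0 else ((-1:ℚ))^(k+1)/(k:ℚ)) * Arow k n
          = ∑ k ∈ Icc 1 n, ((-1:ℚ))^(k+1)/(k:ℚ) * Arow k n := by
        rw [← range_ite_to_Icc (fun k => ((-1:ℚ))^(k+1)/(k:ℚ) * Arow k n) n]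
        refine sum_congr rfl ?_
        intro k _
        by_cases h : k = 0 <;> simp [h]
      rw [h1, ← Finset.Ico_add_one_right_eq_Icc, sum_Ico_eq_sum_range]
      have h2 : n + 1 - 1 = n := by omega
      rw [h2]
      refine sum_congr rfl ?_
      intro q _
      have hA : Arow (1+q) n = app (Arow q) Smat' n - Arow q n := by
        have : 1 + q = q + 1 := by omega
        rw [this]
        rfl
      rw [hA]
      have hc : ((-1:ℚ))^(1+q+1)/((1+q:ℕ):ℚ) = ((-1:ℚ))^q/((q:ℚ)+1) := by
        push_cast
        rw [show 1+q+1 = q+2 by omega]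
        rw [pow_add]
        norm_num
        rw [add_comm 1 (q:ℚ)]
      rw [hc]
    rw [step1]
    have hlam : ∀ k, k ≤ n → lamF k = ∑ q ∈ range n, ((-1:ℚ))^q/((q:ℚ)+1) * Arow q k := by
      intro k hk
      show trLam Smat 1 k = _
      have := lamF_eq k n' (by omega)
      rw [this]
    have happ : app lamF Smat' n = ∑ q ∈ range n, ((-1:ℚ))^q/((q:ℚ)+1) * app (Arow q) Smat' n := by
      rw [app_congr Smat' n hlam]
      unfold app
      have expand : ∀ k, k ∈ range (n+1) →
          (∑ q ∈ range n, ((-1:ℚ))^q/((q:ℚ)+1) * Arow q k) * Smat' k n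
          = ∑ q ∈ range n, ((-1:ℚ))^q/((q:ℚ)+1) * (Arow q k * Smat' k n) := by
        intro k _
        rw [sum_mul]
        exact sum_congr rfl (fun q _ => by ring)
      rw [sum_congr rfl expand, sum_comm]
      refine sum_congr rfl ?_
      intro q _
      rw [mul_sum]
    rw [happ, hlam n (le_refl n), ← sum_sub_distrib]
    refine sum_congr rfl ?_
    intro q _
    ring

theorem main : ∀ j, 1 ≤ j → lamF j = Lrow (j+1) := by
  intro j
  induction j using Nat.strong_induction_on with
  | _ j ih =>
    intro hj
    have e1' : Lrow (j+1) = ∑ k ∈ range (j+1), lamF k * Smat' k (j+1) := by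
      rw [ell_rec (j+1)]
      unfold app
      rw [sum_range_succ, Smat'_self, mul_one]
      ring
    have e2' : ∑ k ∈ range (j+1), Lrow (k+1) * Smat' k (j+1) = Lrow (j+1) := by
      have := heart (j+1)
      unfold app at this
      rw [sum_range_succ, Smat'_self, mul_one] at this
      have h3 : ∑ k ∈ range (j+1), Lrow (k+1) * Smat' k (j+1) + Lrow (j+1+1) = Lrow (j+1) + Lrow (j+2) := this
      have h4 : j+1+1 = j+2 := by omega
      rw [h4] at h3
      linarith [h3]
    have diff : ∑ k ∈ range (j+1), (lamF k - Lrow (k+1)) * Smat' k (j+1) = 0 := by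
      have hd : ∑ k ∈ range (j+1), (lamF k - Lrow (k+1)) * Smat' k (j+1)
          = ∑ k ∈ range (j+1), lamF k * Smat' k (j+1)
            - ∑ k ∈ range (j+1), Lrow (k+1) * Smat' k (j+1) := by
        rw [← sum_sub_distrib]
        exact sum_congr rfl (fun k _ => by ring)
      rw [hd, ← e1', e2', sub_self]
    rw [sum_range_succ] at diff
    have hzero : ∑ k ∈ range j, (lamF k - Lrow (k+1)) * Smat' k (j+1) = 0 := by
      apply sum_eq_zero
      intro k hk
      simp only [mem_range] at hk
      rcases Nat.eq_zero_or_pos k with hk0 | hkpos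
      · subst hk0
        rw [lamF_zero, Lrow_one, sub_self, zero_mul]
      · rw [ih k hk hkpos, sub_self, zero_mul]
    rw [hzero, zero_add] at diff
    have hS : Smat' j (j+1) ≠ 0 := by
      show ((stirling2 (j+1) j : ℕ) : ℚ) ≠ 0
      match j, hj with
      | (j'+1), _ =>
        have hpos := StirAux.st_sub_one_pos j'
        show ((stirling2 (j'+2) (j'+1) : ℕ) : ℚ) ≠ 0
        exact Nat.cast_ne_zero.mpr (by omega)
    rcases mul_eq_zero.mp diff with h | h
    · linarith [h]
    · exact absurd h hS

end
end SAux


theorem trLam_row_eq_shifted_log_row (j : ℕ) (hj : 1 ≤ j) :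
    trLam Smat 1 j = trLog Smat 1 (j + 1) := by
  have h := SAux.main j hj
  have h2 : trLam Smat 1 j = SAux.lamF j := rfl
  rw [h2, h, SAux.Lrow_eq_trLog]
end
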